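/- Let s>0, y_1>0, y_2>0, and a,b∈ℕ_0. Then ∫_0^{y_1} α^{-1}(1-α/y_1)^{2s-1}[(y_1-α)^a (y_2+α)^b − y_1^a y_2^b] dα = Σ_{ℓ=1}^{b} binom(b,ℓ) y_1^{a+ℓ} y_2^{b-ℓ} B(ℓ, a+2s) + y_1^a y_2^b (ψ(2s) − ψ(a+2s)), where B(x,y)=Γ(x)Γ(y)/Γ(x+y) is the Beta function and ψ the digamma function. -/

import Mathlib

open MeasureTheory Set

noncomputable section

namespace HeatModel

/-- The digamma function `ψ = Γ'/Γ`. -/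
def digamma (x : ℝ) : ℝ := deriv Real.Gamma x / Real.Gamma x

/-- The Beta function `B(x,y) = Γ(x)Γ(y)/Γ(x+y)`. -/
def betaFun (x y : ℝ) : ℝ := Real.Gamma x * Real.Gamma y / Real.Gamma (x + y)

lemma beta_aux (p q : ℝ) (hp : 0 < p) (hq : 0 < q) :
    IntegrableOn (fun u : ℝ => u ^ (p-1) * (1-u) ^ (q-1)) (Ioc 0 1) volume ∧
    ∫ u in Ioc (0:ℝ) 1, u ^ (p-1) * (1-u) ^ (q-1) = betaFun p q := by
  set f : ℝ → ℝ := fun u => u ^ (p-1) * (1-u) ^ (q-1) with hf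
  have key : ∀ x ∈ Icc (0:ℝ) 1,
      ((f x : ℝ) : ℂ) = (x:ℂ) ^ ((p:ℂ)-1) * (1-(x:ℂ)) ^ ((q:ℂ)-1) := by
    intro x hx
    have h0 : (0:ℝ) ≤ x := hx.1
    have h1 : (0:ℝ) ≤ 1 - x := by linarith [hx.2]
    simp only [hf]
    push_cast
    rw [Complex.ofReal_cpow h0, Complex.ofReal_cpow h1]
    push_cast; ring
  have hC : IntervalIntegrable
      (fun x : ℝ => (x:ℂ) ^ ((p:ℂ) - 1) * (1 - (x:ℂ)) ^ ((q:ℂ) - 1)) volume 0 1 :=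
    Complex.betaIntegral_convergent (by simpa) (by simpa)
  have hIC : IntegrableOn (fun x : ℝ => ((f x : ℝ) : ℂ)) (Ioc 0 1) volume := by
    refine hC.1.congr_fun (fun x hx => (key x ⟨hx.1.le, hx.2⟩).symm) measurableSet_Ioc
  have hI : IntegrableOn f (Ioc 0 1) volume := by
    exact (by simpa using hIC.re : Integrable (fun x => f x) (volume.restrict (Ioc 0 1)))
  refine ⟨hI, ?_⟩
  have hbeta : Complex.betaIntegral p q = ((∫ u in Ioc (0:ℝ) 1, f u : ℝ) : ℂ) := by
    rw [Complex.betaIntegral]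
    rw [intervalIntegral.integral_congr (g := fun x : ℝ => ((f x : ℝ) : ℂ))
      (by intro x hx; rw [uIcc_of_le zero_le_one] at hx; exact (key x hx).symm)]
    rw [intervalIntegral.integral_ofReal, intervalIntegral.integral_of_le zero_le_one]
  have hG := Complex.Gamma_mul_Gamma_eq_betaIntegral
    (s := (p:ℂ)) (t := (q:ℂ)) (by simpa) (by simpa)
  rw [hbeta] at hG
  have hGpq : Real.Gamma (p + q) ≠ 0 := (Real.Gamma_pos_of_pos (by linarith)).ne'
  have : ((Real.Gamma p * Real.Gamma q : ℝ) : ℂ)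
      = ((Real.Gamma (p+q) * ∫ u in Ioc (0:ℝ) 1, f u : ℝ) : ℂ) := by
    push_cast
    push_cast
    rw [Complex.Gamma_ofReal, Complex.Gamma_ofReal, ← Complex.ofReal_add,
      Complex.Gamma_ofReal] at hG
    exact hG
  have h2 : Real.Gamma p * Real.Gamma q = Real.Gamma (p+q) * ∫ u in Ioc (0:ℝ) 1, f u :=
    Complex.ofReal_injective this
  rw [betaFun, eq_div_iff hGpq, h2]; ring


lemma J_aux (m : ℕ) (q : ℝ) (hq : 0 < q) :
    IntegrableOn (fun u : ℝ => u ^ m * (1-u) ^ (q-1)) (Ioo 0 1) volume ∧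
    ∫ u in Ioo (0:ℝ) 1, u ^ m * (1-u) ^ (q-1) = betaFun (m+1) q := by
  have hp : (0:ℝ) < m + 1 := by positivity
  obtain ⟨hI, hV⟩ := beta_aux (m+1) q hp hq
  have hkey : ∀ u ∈ Ioo (0:ℝ) 1, u ^ ((m:ℝ)+1-1) * (1-u) ^ (q-1)
      = u ^ m * (1-u) ^ (q-1) := by
    intro u hu
    rw [show (m:ℝ)+1-1 = (m:ℝ) by ring, Real.rpow_natCast]
  constructor
  · exact ((hI.mono_set Ioo_subset_Ioc_self).congr_fun hkey measurableSet_Ioo)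
  · rw [← setIntegral_congr_fun measurableSet_Ioo hkey, ← integral_Ioc_eq_integral_Ioo, hV]

lemma betaFun_one (q : ℝ) (hq : 0 < q) : betaFun 1 q = 1/q := by
  rw [betaFun, Real.Gamma_one, add_comm, Real.Gamma_add_one hq.ne']
  rw [one_mul, div_mul_eq_div_div_swap, div_self (Real.Gamma_pos_of_pos hq).ne']

lemma digamma_add_one (x : ℝ) (hx : 0 < x) : digamma (x+1) = digamma x + 1/x := by
  have hne : ∀ t : ℝ, 0 < t → ∀ m : ℕ, t ≠ -(m:ℝ) := by
    intro t ht m h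
    have : (0:ℝ) ≤ (m:ℝ) := Nat.cast_nonneg m
    linarith [h ▸ ht]
  have hd1 : HasDerivAt Real.Gamma (deriv Real.Gamma (x+1)) (x+1) :=
    (Real.differentiableAt_Gamma (hne _ (by linarith))).hasDerivAt
  have hcomp : HasDerivAt (fun t => Real.Gamma (t+1)) (deriv Real.Gamma (x+1) * 1) x :=
    by rw [mul_one]; exact hd1.comp_add_const x 1
  have hdx : HasDerivAt Real.Gamma (deriv Real.Gamma x) x :=
    (Real.differentiableAt_Gamma (hne _ hx)).hasDerivAt
  have hmul : HasDerivAt (fun t => t * Real.Gamma t)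
      (1 * Real.Gamma x + x * deriv Real.Gamma x) x := (hasDerivAt_id x).mul hdx
  have heq : (fun t : ℝ => t * Real.Gamma t) =ᶠ[nhds x] (fun t => Real.Gamma (t+1)) := by
    filter_upwards [eventually_gt_nhds hx] with t ht
    exact (Real.Gamma_add_one ht.ne').symm
  have huniq := hmul.unique (hcomp.congr_of_eventuallyEq heq)
  have hG : Real.Gamma x ≠ 0 := (Real.Gamma_pos_of_pos hx).ne'
  rw [mul_one] at huniq
  rw [digamma, digamma, Real.Gamma_add_one hx.ne', ← huniq]
  field_simp
  ring

lemma digamma_add_nat (x : ℝ) (hx : 0 < x) (a : ℕ) :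
    digamma (x + a) = digamma x + ∑ k ∈ Finset.range a, 1/(x + k) := by
  induction a with
  | zero => simp
  | succ n ih =>
    have : x + (n+1 : ℕ) = (x + n) + 1 := by push_cast; ring
    rw [this, digamma_add_one _ (by positivity), ih, Finset.sum_range_succ]
    push_cast; ring



/-- The action of the rightward Levy bulk generator on a product of monomials. -/
theorem bulk_on_monomials (s : ℝ) (hs : 0 < s) (y₁ y₂ : ℝ) (h₁ : 0 < y₁) (h₂ : 0 < y₂)
    (a b : ℕ) :
    (∫ α in Set.Ioo 0 y₁,
        α⁻¹ * (1 - α / y₁) ^ (2 * s - 1) * ((y₁ - α) ^ a * (y₂ + α) ^ b - y₁ ^ a * y₂ ^ b))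
    = (∑ l ∈ Finset.Icc 1 b,
        (Nat.choose b l : ℝ) * y₁ ^ (a + l) * y₂ ^ (b - l) * betaFun l ((a : ℝ) + 2 * s))
      + y₁ ^ a * y₂ ^ b * (digamma (2 * s) - digamma ((a : ℝ) + 2 * s)) := by
  have hy₁ : y₁ ≠ 0 := h₁.ne'
  have hx : (0:ℝ) < 2 * s := by linarith
  set f : ℝ → ℝ := fun α =>
    α⁻¹ * (1 - α / y₁) ^ (2 * s - 1) * ((y₁ - α) ^ a * (y₂ + α) ^ b - y₁ ^ a * y₂ ^ b) with hfdef
  set G : ℝ → ℝ := fun u =>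
    (∑ i ∈ Finset.range b, ((Nat.choose b (1+i) : ℝ) * y₁ ^ (a+(1+i)) * y₂ ^ (b-(1+i)))
        * (u ^ i * (1-u) ^ (((a:ℝ) + 2*s) - 1)))
    - ∑ k ∈ Finset.range a, (y₁ ^ a * y₂ ^ b) * (u ^ (0:ℕ) * (1-u) ^ ((2*s + (k:ℕ)) - 1))
    with hGdef
  -- Step 1 : substitution α = y₁ u
  have step1 : (∫ α in Set.Ioo 0 y₁, f α) = ∫ u in Set.Ioo (0:ℝ) 1, y₁ * f (y₁ * u) := by
    have h0 : (∫ α in Set.Ioo 0 y₁, f α) = ∫ α in (0:ℝ)..y₁, f α := by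
      rw [intervalIntegral.integral_of_le h₁.le, integral_Ioc_eq_integral_Ioo]
    have h1 := intervalIntegral.integral_comp_mul_left (a := (0:ℝ)) (b := (1:ℝ)) f hy₁
    rw [mul_zero, mul_one, smul_eq_mul] at h1
    have h2 : ∫ u in (0:ℝ)..1, y₁ * f (y₁ * u) = y₁ * ∫ u in (0:ℝ)..1, f (y₁ * u) :=
      intervalIntegral.integral_const_mul _ _
    rw [h0, ← integral_Ioc_eq_integral_Ioo, ← intervalIntegral.integral_of_le zero_le_one,
      h2, h1]
    field_simp
  -- Step 2 : pointwise identity on (0,1)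
  have hpt : ∀ u ∈ Set.Ioo (0:ℝ) 1, y₁ * f (y₁ * u) = G u := by
    intro u hu
    obtain ⟨hu0, hu1⟩ := hu
    have hv : (0:ℝ) < 1 - u := by linarith
    have e1 : 1 - (y₁*u)/y₁ = 1 - u := by field_simp
    have e2 : (y₁ - y₁*u) ^ a = y₁ ^ a * (1-u) ^ a := by
      rw [show y₁ - y₁*u = y₁*(1-u) by ring, mul_pow]
    have e3 : (y₂ + y₁*u) ^ b =
        (∑ i ∈ Finset.range b, (y₁*u) ^ (i+1) * y₂ ^ (b-(i+1)) * (Nat.choose b (i+1) : ℝ))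
          + y₂ ^ b := by
      rw [show y₂ + y₁*u = y₁*u + y₂ by ring, add_pow, Finset.sum_range_succ']
      simp
    have e4 : (1-u) ^ a - 1 = -u * ∑ k ∈ Finset.range a, (1-u) ^ k := by
      have hg := geom_sum_mul (1-u) a
      rw [← hg]; ring
    have e5 : ∀ n : ℕ, (1-u) ^ (2*s-1) * (1-u) ^ n = (1-u) ^ (((n:ℝ) + 2*s) - 1) := by
      intro n
      rw [← Real.rpow_natCast (1-u) n, ← Real.rpow_add hv]
      congr 1; ring
    simp only [hfdef, hGdef]
    rw [e1, e2, e3]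
    have h4 : y₁^a * (1-u)^a *
        ((∑ i ∈ Finset.range b, (y₁*u)^(i+1) * y₂^(b-(i+1)) * (Nat.choose b (i+1) : ℝ))
          + y₂^b) - y₁^a * y₂^b
        = (∑ i ∈ Finset.range b,
            (y₁^a * (1-u)^a) * ((y₁*u)^(i+1) * y₂^(b-(i+1)) * (Nat.choose b (i+1) : ℝ)))
          + ∑ k ∈ Finset.range a, (y₁^a * y₂^b * (-u)) * (1-u)^k := by
      rw [← Finset.mul_sum, ← Finset.mul_sum]
      linear_combination (y₁^a * y₂^b) * e4
    rw [h4]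
    have split : y₁ * ((y₁*u)⁻¹ * (1-u)^(2*s-1) *
        ((∑ i ∈ Finset.range b,
            (y₁^a * (1-u)^a) * ((y₁*u)^(i+1) * y₂^(b-(i+1)) * (Nat.choose b (i+1) : ℝ)))
          + ∑ k ∈ Finset.range a, (y₁^a * y₂^b * (-u)) * (1-u)^k))
        = (∑ i ∈ Finset.range b, (y₁ * ((y₁*u)⁻¹ * (1-u)^(2*s-1)))
            * ((y₁^a * (1-u)^a) * ((y₁*u)^(i+1) * y₂^(b-(i+1)) * (Nat.choose b (i+1) : ℝ))))
          + ∑ k ∈ Finset.range a, (y₁ * ((y₁*u)⁻¹ * (1-u)^(2*s-1)))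
            * ((y₁^a * y₂^b * (-u)) * (1-u)^k) := by
      simp only [← Finset.mul_sum]; ring
    rw [split]
    congr 1
    · refine Finset.sum_congr rfl fun i _ => ?_
      rw [← e5 a, mul_pow]
      field_simp
      ring
    · rw [← Finset.sum_neg_distrib]
      refine Finset.sum_congr rfl fun k _ => ?_
      rw [show ((2*s + (k:ℕ)) - 1 : ℝ) = (((k:ℕ):ℝ) + 2*s) - 1 by push_cast; ring, ← e5 k]
      field_simp
  rw [step1, setIntegral_congr_fun measurableSet_Ioo hpt]
  -- Step 3 : integrate G termwise
  have hq1 : (0:ℝ) < (a:ℝ) + 2*s := by positivity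
  have hInt1 : ∀ i ∈ Finset.range b, IntegrableOn
      (fun u : ℝ => ((Nat.choose b (1+i) : ℝ) * y₁ ^ (a+(1+i)) * y₂ ^ (b-(1+i)))
        * (u ^ i * (1-u) ^ (((a:ℝ) + 2*s) - 1))) (Set.Ioo 0 1) volume :=
    fun i _ => ((J_aux i _ hq1).1.const_mul _)
  have hInt2 : ∀ k ∈ Finset.range a, IntegrableOn
      (fun u : ℝ => (y₁ ^ a * y₂ ^ b) * (u ^ (0:ℕ) * (1-u) ^ ((2*s + (k:ℕ)) - 1)))
      (Set.Ioo 0 1) volume :=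
    fun k _ => ((J_aux 0 (2*s + (k:ℕ)) (by positivity)).1.const_mul _)
  have hval : (∫ u in Set.Ioo (0:ℝ) 1, G u)
      = (∑ i ∈ Finset.range b, ((Nat.choose b (1+i) : ℝ) * y₁ ^ (a+(1+i)) * y₂ ^ (b-(1+i)))
          * betaFun ((i:ℝ)+1) ((a:ℝ) + 2*s))
        - ∑ k ∈ Finset.range a, (y₁ ^ a * y₂ ^ b) * (1/(2*s + (k:ℕ))) := by
    simp only [hGdef]
    rw [integral_sub (integrable_finset_sum _ hInt1) (integrable_finset_sum _ hInt2),
        integral_finset_sum _ hInt1, integral_finset_sum _ hInt2]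
    congr 1
    · refine Finset.sum_congr rfl fun i _ => ?_
      rw [MeasureTheory.integral_const_mul, (J_aux i _ hq1).2]
    · refine Finset.sum_congr rfl fun k _ => ?_
      rw [MeasureTheory.integral_const_mul, (J_aux 0 (2*s + (k:ℕ)) (by positivity)).2,
        show (((0:ℕ):ℝ)+1 : ℝ) = 1 by norm_num, betaFun_one _ (by positivity)]
  rw [hval, ← Finset.Ico_add_one_right_eq_Icc, Finset.sum_Ico_eq_sum_range]
  simp only [Nat.add_sub_cancel]
  have hS : ∑ i ∈ Finset.range b, (Nat.choose b (1+i) : ℝ) * y₁ ^ (a+(1+i)) * y₂ ^ (b-(1+i))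
        * betaFun ((1+i:ℕ):ℝ) ((a:ℝ)+2*s)
      = ∑ i ∈ Finset.range b, ((Nat.choose b (1+i) : ℝ) * y₁ ^ (a+(1+i)) * y₂ ^ (b-(1+i)))
        * betaFun ((i:ℝ)+1) ((a:ℝ)+2*s) := by
    refine Finset.sum_congr rfl fun i _ => ?_
    rw [show ((1+i:ℕ):ℝ) = (i:ℝ)+1 by push_cast; ring]
  rw [hS, show ((a:ℝ)+2*s) = 2*s + (a:ℝ) by ring, digamma_add_nat (2*s) hx a]
  have hT : ∑ k ∈ Finset.range a, (y₁ ^ a * y₂ ^ b) * (1/(2*s + (k:ℕ)))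
      = (y₁ ^ a * y₂ ^ b) * ∑ k ∈ Finset.range a, 1/(2*s + (k:ℕ)) :=
    (Finset.mul_sum _ _ _).symm
  rw [hT]
  ring

end HeatModel
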